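/- (Lemma `lemma.empty.0`) Assume in addition γ₀ ≥ 2γ. Then for every ℓ ∈ ℤ^ν \ {0}, every n ∈ ℕ₀ with ⟨n⟩^α ≥ 4C₀(γ₀M)^{−2}⟨ℓ⟩^{τ₀}, and every ω ∈ Ω₀, one has |ω·ℓ + μ_n(ω) − μ'_n(ω)| ≥ γ·⟨ℓ⟩^{−τ}·M^{−α}. Moreover, if n ∈ ℕ₀ is such that μ_n(ω) = μ'_n(ω) for all ω ∈ R_M (as happens for n = 0, where the block is one-dimensional), then the same lower bound holds for every ℓ ∈ ℤ^ν \ {0} and every ω ∈ Ω₀, with no further condition on n. -/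

import Mathlib

noncomputable section

open MeasureTheory

/-- The closed annulus `R_M = {ω ∈ ℝ^ν : M ≤ |ω| ≤ 2M}`. -/
def RM (ν : ℕ) (M : ℝ) : Set (EuclideanSpace ℝ (Fin ν)) :=
  {ω | M ≤ ‖ω‖ ∧ ‖ω‖ ≤ 2 * M}

/-- Euclidean norm of an integer vector `ℓ ∈ ℤ^ν`. -/
def znorm {ν : ℕ} (ℓ : Fin ν → ℤ) : ℝ := Real.sqrt (∑ i, ((ℓ i : ℝ)) ^ 2)

/-- The inner product `ω·ℓ`. -/
def dotZ {ν : ℕ} (ω : EuclideanSpace ℝ (Fin ν)) (ℓ : Fin ν → ℤ) : ℝ :=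
  ∑ i, ω i * (ℓ i : ℝ)

/-- Japanese bracket of a real number, `⟨x⟩ = max {1, |x|}`. -/
def japR (x : ℝ) : ℝ := max 1 |x|

/-- Japanese bracket of an integer vector, `⟨ℓ⟩ = max {1, |ℓ|}`. -/
def japZv {ν : ℕ} (ℓ : Fin ν → ℤ) : ℝ := max 1 (znorm ℓ)

/-- The Diophantine set `Ω₀ = {ω ∈ R_M : |ω·ℓ| ≥ γ₀ M ⟨ℓ⟩^{−τ₀} ∀ ℓ ≠ 0}`. -/
def dioph (ν : ℕ) (M γ₀ τ₀ : ℝ) : Set (EuclideanSpace ℝ (Fin ν)) :=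
  {ω ∈ RM ν M | ∀ ℓ : Fin ν → ℤ, ℓ ≠ 0 → γ₀ * M * japZv ℓ ^ (-τ₀) ≤ |dotZ ω ℓ|}

/-- **Lemma `lemma.empty.0`.** Under `γ₀ ≥ 2γ`, the diagonal nearly-resonant sets with
`⟨n⟩^α ≥ 4C₀(γ₀M)^{−2}⟨ℓ⟩^{τ₀}` (or with coinciding block eigenvalues) are empty. -/
theorem lemma_empty_0
    (ν : ℕ) (hν : 1 ≤ ν) (M : ℝ) (hM : 1 ≤ M)
    (α γ γ₀ τ₀ τ : ℝ) (hα : 0 < α) (hα1 : α < 1) (hγ : 0 < γ) (hγ1 : γ < 1)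
    (hγ₀ : 0 < γ₀) (hγ₀1 : γ₀ < 1) (hτ₀ : (ν : ℝ) - 1 < τ₀) (hτ : τ₀ ≤ τ)
    (mbar C₀ : ℝ) (hmbar : 0 < mbar) (hC₀ : 0 < C₀)
    (lam : ℕ → ℝ) (hlam : ∀ n : ℕ, |lam n - (n : ℝ)| ≤ mbar / max 1 (n : ℝ))
    (μ μ' : ℕ → EuclideanSpace ℝ (Fin ν) → ℝ)
    (hμ : ∀ n : ℕ, ∀ ω ∈ RM ν M,
      |μ n ω - lam n| ≤ C₀ / (γ₀ * M) / (max 1 (n : ℝ)) ^ α)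
    (hμ' : ∀ n : ℕ, ∀ ω ∈ RM ν M,
      |μ' n ω - lam n| ≤ C₀ / (γ₀ * M) / (max 1 (n : ℝ)) ^ α)
    (hγγ₀ : 2 * γ ≤ γ₀) :
    (∀ ℓ : Fin ν → ℤ, ℓ ≠ 0 → ∀ n : ℕ,
        4 * C₀ / (γ₀ * M) ^ 2 * japZv ℓ ^ τ₀ ≤ (max 1 (n : ℝ)) ^ α →
        ∀ ω ∈ dioph ν M γ₀ τ₀,
          γ * japZv ℓ ^ (-τ) * M ^ (-α) ≤ |dotZ ω ℓ + μ n ω - μ' n ω|) ∧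
    (∀ n : ℕ, (∀ ω ∈ RM ν M, μ n ω = μ' n ω) →
        ∀ ℓ : Fin ν → ℤ, ℓ ≠ 0 →
        ∀ ω ∈ dioph ν M γ₀ τ₀,
          γ * japZv ℓ ^ (-τ) * M ^ (-α) ≤ |dotZ ω ℓ + μ n ω - μ' n ω|) := by
  have hMpos : (0:ℝ) < M := lt_of_lt_of_le one_pos hM
  have hτ₀0 : (0:ℝ) ≤ τ₀ := by
    have : (0:ℝ) ≤ (ν : ℝ) - 1 := by
      have : (1:ℝ) ≤ (ν:ℝ) := by exact_mod_cast hν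
      linarith
    linarith
  have key : ∀ ℓ : Fin ν → ℤ, γ * japZv ℓ ^ (-τ) * M ^ (-α)
      ≤ γ₀ / 2 * M * japZv ℓ ^ (-τ₀) := by
    intro ℓ
    have hL1 : (1:ℝ) ≤ japZv ℓ := le_max_left _ _
    have h1 : japZv ℓ ^ (-τ) ≤ japZv ℓ ^ (-τ₀) :=
      Real.rpow_le_rpow_of_exponent_le hL1 (by linarith)
    have h2 : M ^ (-α) ≤ 1 :=
      Real.rpow_le_one_of_one_le_of_nonpos hM (by linarith)
    have hLpos : (0:ℝ) < japZv ℓ ^ (-τ) := Real.rpow_pos_of_pos (by linarith) _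
    have hL0pos : (0:ℝ) < japZv ℓ ^ (-τ₀) := Real.rpow_pos_of_pos (by linarith) _
    have hγle : γ ≤ γ₀ / 2 * M := by nlinarith
    calc γ * japZv ℓ ^ (-τ) * M ^ (-α) ≤ γ * japZv ℓ ^ (-τ₀) * 1 := by
          apply mul_le_mul (mul_le_mul_of_nonneg_left h1 (le_of_lt hγ)) h2
            (Real.rpow_nonneg (by positivity) _) (by positivity)
      _ = γ * japZv ℓ ^ (-τ₀) := by ring
      _ ≤ γ₀ / 2 * M * japZv ℓ ^ (-τ₀) :=
          mul_le_mul_of_nonneg_right hγle (le_of_lt hL0pos)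
  constructor
  · intro ℓ hℓ n hn ω hω
    obtain ⟨hωRM, hdio⟩ := hω
    have hL1 : (1:ℝ) ≤ japZv ℓ := le_max_left _ _
    have hN1 : (1:ℝ) ≤ max 1 (n:ℝ) := le_max_left _ _
    have hNα : (0:ℝ) < (max 1 (n:ℝ)) ^ α := Real.rpow_pos_of_pos (by linarith) _
    have hLτ : (0:ℝ) < japZv ℓ ^ τ₀ := Real.rpow_pos_of_pos (by linarith) _
    have hLτ' : (0:ℝ) < japZv ℓ ^ (-τ₀) := Real.rpow_pos_of_pos (by linarith) _
    have hinv : japZv ℓ ^ (-τ₀) = (japZv ℓ ^ τ₀)⁻¹ := by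
      rw [Real.rpow_neg (by linarith)]
    -- |μ - μ'| ≤ 2C₀/(γ₀M)/N^α ≤ γ₀/2 * M * ⟨ℓ⟩^{-τ₀}
    have hdiff : |μ n ω - μ' n ω| ≤ γ₀ / 2 * M * japZv ℓ ^ (-τ₀) := by
      have h1 := hμ n ω hωRM
      have h2 := hμ' n ω hωRM
      have htr : |μ n ω - μ' n ω| ≤ 2 * (C₀ / (γ₀ * M) / (max 1 (n:ℝ)) ^ α) := by
        have : μ n ω - μ' n ω = (μ n ω - lam n) - (μ' n ω - lam n) := by ring
        rw [this]
        calc |(μ n ω - lam n) - (μ' n ω - lam n)|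
            ≤ |μ n ω - lam n| + |μ' n ω - lam n| := abs_sub _ _
          _ ≤ 2 * (C₀ / (γ₀ * M) / (max 1 (n:ℝ)) ^ α) := by linarith
      refine htr.trans ?_
      rw [hinv]
      have hgm : (0:ℝ) < γ₀ * M := by positivity
      set A := (max 1 (n:ℝ)) ^ α with hA
      set B := japZv ℓ ^ τ₀ with hB
      have hn' : 4 * C₀ * B ≤ A * (γ₀ * M) ^ 2 := by
        rw [div_mul_eq_mul_div, div_le_iff₀ (by positivity : (0:ℝ) < (γ₀*M)^2)] at hn
        linarith
      rw [div_div, ← sub_nonneg]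
      have hrw : γ₀ / 2 * M * B⁻¹ - 2 * (C₀ / (γ₀ * M * A))
          = (γ₀ / 2 * M * (γ₀ * M) * A - 2 * C₀ * B) / (B * (γ₀ * M * A)) := by
        field_simp
      rw [hrw]
      apply div_nonneg _ (by positivity)
      nlinarith
    have hdot := hdio ℓ hℓ
    have habs : γ₀ * M * japZv ℓ ^ (-τ₀) - |μ n ω - μ' n ω|
        ≤ |dotZ ω ℓ + μ n ω - μ' n ω| := by
      have h := abs_sub_abs_le_abs_sub (dotZ ω ℓ) (-(μ n ω - μ' n ω))
      rw [abs_neg, sub_neg_eq_add] at h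
      have heq : dotZ ω ℓ + μ n ω - μ' n ω = dotZ ω ℓ + (μ n ω - μ' n ω) := by ring
      rw [heq]
      linarith
    have := key ℓ
    linarith
  · intro n heq ℓ hℓ ω hω
    obtain ⟨hωRM, hdio⟩ := hω
    have hdot := hdio ℓ hℓ
    have hμeq := heq ω hωRM
    have : dotZ ω ℓ + μ n ω - μ' n ω = dotZ ω ℓ := by rw [hμeq]; ring
    rw [this]
    refine (key ℓ).trans (le_trans ?_ hdot)
    have hL1 : (1:ℝ) ≤ japZv ℓ := le_max_left _ _
    have hLτ' : (0:ℝ) < japZv ℓ ^ (-τ₀) := Real.rpow_pos_of_pos (by linarith) _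
    nlinarith [mul_pos hMpos hLτ']
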